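/- In the Klein bottle group K = ⟨a, b | bab⁻¹ = a⁻¹⟩, the normalizer of the cyclic subgroup K_n = ⟨a^n b⟩ (for any n ∈ Z) is isomorphic to Z. -/

import Mathlib

/-- The Klein bottle group `K = ℤ ⋊ ℤ`, where the generator of the acting copy of `ℤ`
acts on the normal copy of `ℤ` by inversion.  This realizes the presentation
`⟨a, b | b a b⁻¹ = a⁻¹⟩`. -/
abbrev KleinBottleGroup : Type :=
  Multiplicative ℤ ⋊[zpowersHom (MulAut (Multiplicative ℤ)) (MulEquiv.inv (Multiplicative ℤ))]
    Multiplicative ℤ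

/-- The generator `a` of the Klein bottle group (the normal `ℤ` factor). -/
def kleinA : KleinBottleGroup := SemidirectProduct.inl (Multiplicative.ofAdd 1)

/-- The generator `b` of the Klein bottle group (the acting `ℤ` factor). -/
def kleinB : KleinBottleGroup := SemidirectProduct.inr (Multiplicative.ofAdd 1)

open SemidirectProduct Multiplicative Subgroup

lemma kleinA_zpow (n : ℤ) : kleinA ^ n = inl (ofAdd n) := by
  rw [kleinA, ← map_zpow, ← ofAdd_zsmul, smul_eq_mul, mul_one]

lemma klein_g_left (n : ℤ) : (kleinA ^ n * kleinB).left = ofAdd n := by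
  simp [kleinA_zpow, kleinB, mul_left]

lemma klein_g_right (n : ℤ) : (kleinA ^ n * kleinB).right = ofAdd 1 := by
  simp [kleinA_zpow, kleinB, mul_right]

lemma klein_rightHom_g_zpow (n m : ℤ) :
    rightHom ((kleinA ^ n * kleinB) ^ m) = ofAdd m := by
  rw [map_zpow, rightHom_eq_right, klein_g_right, ← ofAdd_zsmul, smul_eq_mul, mul_one]

lemma klein_comm_mem (n : ℤ) (x : KleinBottleGroup)
    (h : x * (kleinA ^ n * kleinB) = (kleinA ^ n * kleinB) * x) :
    x ∈ zpowers (kleinA ^ n * kleinB) := by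
  obtain ⟨g, hg⟩ : ∃ g, kleinA ^ n * kleinB = g := ⟨_, rfl⟩
  have gl : g.left = ofAdd n := hg ▸ klein_g_left n
  have gr : g.right = ofAdd 1 := hg ▸ klein_g_right n
  have grh : ∀ m : ℤ, ((g : KleinBottleGroup) ^ m).right = ofAdd m := fun m =>
    hg ▸ (by rw [← rightHom_eq_right]; exact klein_rightHom_g_zpow n m)
  rw [hg] at h ⊢
  set j := toAdd x.right with hj
  set y := x * (g ^ j)⁻¹ with hy
  have hyr : y.right = 1 := by
    rw [hy, mul_right, inv_right, grh, hj, ofAdd_toAdd, mul_inv_cancel]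
  have hycomm : y * g = g * y := by
    have h2 : (g ^ j)⁻¹ * g = g * (g ^ j)⁻¹ := by group
    rw [hy, mul_assoc, h2, ← mul_assoc, h, mul_assoc]
  clear_value y
  have hleft := congrArg SemidirectProduct.left hycomm
  rw [mul_left, mul_left, hyr, gl, gr] at hleft
  simp only [map_one, MulAut.one_apply] at hleft
  have hphi : (zpowersHom (MulAut (Multiplicative ℤ)) (MulEquiv.inv (Multiplicative ℤ)))
      (ofAdd 1) y.left = y.left⁻¹ := by
    simp [zpowersHom_apply]
  rw [hphi] at hleft
  have hyl : y.left = 1 := by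
    have : y.left * y.left = 1 := by
      have := mul_comm (ofAdd n) y.left⁻¹ ▸ hleft
      have h3 : y.left = y.left⁻¹ := mul_right_cancel this
      calc y.left * y.left = y.left * y.left⁻¹ := by rw [← h3]
        _ = 1 := mul_inv_cancel _
    have : toAdd y.left + toAdd y.left = 0 := by
      have := congrArg toAdd this; simpa using this
    have : toAdd y.left = 0 := by omega
    simpa using congrArg ofAdd this
  have hy1 : y = 1 := by
    ext
    · simpa using hyl
    · simpa using hyr
  have : x = g ^ j := by
    have := congrArg (· * g ^ j) hy1
    simpa [hy, mul_assoc] using this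
  exact this ▸ zpow_mem (mem_zpowers g) j

lemma klein_normalizer_eq (n : ℤ) :
    Subgroup.normalizer (zpowers (kleinA ^ n * kleinB) : Set KleinBottleGroup) = zpowers (kleinA ^ n * kleinB) := by
  set g := kleinA ^ n * kleinB with hg
  refine le_antisymm (fun x hx => ?_) le_normalizer
  have hmem : x * g * x⁻¹ ∈ zpowers g :=
    (Subgroup.mem_normalizer_iff.mp hx g).mp (mem_zpowers g)
  obtain ⟨k, hk'⟩ := hmem
  have hk : g ^ k = x * g * x⁻¹ := hk'
  have hr := congrArg rightHom hk
  rw [klein_rightHom_g_zpow, map_mul, map_mul, map_inv] at hr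
  rw [show rightHom g = ofAdd 1 from by rw [rightHom_eq_right]; exact klein_g_right n] at hr
  have hk1 : k = 1 := by
    have : ofAdd k = ofAdd 1 := by
      rw [hr]; rw [mul_comm, ← mul_assoc, inv_mul_cancel, one_mul]
    simpa using this
  rw [hk1, zpow_one] at hk
  have hcomm : x * g = g * x := by
    have := congrArg (· * x) hk
    simpa [mul_assoc] using this.symm
  exact klein_comm_mem n x hcomm


/-- In the Klein bottle group `K = ⟨a, b | b a b⁻¹ = a⁻¹⟩`, the normalizer of the cyclic
subgroup generated by `aⁿ b` is infinite cyclic, i.e. isomorphic to `ℤ`. -/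
theorem klein_normalizer_isomorphic_Z (n : ℤ) :
    Nonempty (Subgroup.normalizer (Subgroup.zpowers (kleinA ^ n * kleinB) : Set KleinBottleGroup) ≃* Multiplicative ℤ) := by
  set g := kleinA ^ n * kleinB with hg
  let F : Multiplicative ℤ →* Subgroup.normalizer (zpowers g : Set KleinBottleGroup) :=
    { toFun := fun k => ⟨g ^ toAdd k, le_normalizer (zpow_mem (mem_zpowers g) _)⟩
      map_one' := Subtype.ext (by simp)
      map_mul' := fun a b => Subtype.ext (by simp [toAdd_mul, zpow_add]) }
  have hbij : Function.Bijective F := by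
    constructor
    · intro a b hab
      have : g ^ toAdd a = g ^ toAdd b := congrArg Subtype.val hab
      have := congrArg rightHom this
      rw [klein_rightHom_g_zpow, klein_rightHom_g_zpow] at this
      simpa using this
    · rintro ⟨x, hx⟩
      rw [klein_normalizer_eq] at hx
      obtain ⟨k, hk⟩ := hx
      exact ⟨ofAdd k, Subtype.ext (by show g ^ toAdd (ofAdd k) = x; simpa using hk)⟩
  exact ⟨(MulEquiv.ofBijective F hbij).symm⟩
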